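/- arXiv:2110.14962 — 2 statements merged into one kernel-verified Lean document; each statement's English description precedes it below -/
import Mathlib

section
/- Let m, k be positive natural numbers, let c : ℝ^m → ℝ be continuous, and let x* ∈ [0,1]^m be the unique global minimizer of c over [0,1]^m. Then there exists a function δ : ℝ → ℝ with δ(ε) → 0 as ε → 0⁺ such that for every ε ≥ 0, for every map G : [0,1]^k → [0,1]^m for which there exists z̃ ∈ [0,1]^k with ‖G(z̃) − x*‖ ≤ ε, and for every global minimizer z* of c ∘ G over [0,1]^k, one has ‖G(z*) − x*‖ ≤ δ(ε). -/
/-- The unit cube `[0,1]^n` in Euclidean space `ℝ^n`. -/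
def unitCube (n : ℕ) : Set (EuclideanSpace ℝ (Fin n)) :=
  WithLp.ofLp ⁻¹' (Set.univ.pi fun _ => Set.Icc (0 : ℝ) 1)

lemma isCompact_unitCube (n : ℕ) : IsCompact (unitCube n) :=
  (PiLp.homeomorph 2 (fun _ : Fin n => ℝ)).isCompact_preimage.mpr
    (isCompact_univ_pi fun _ => isCompact_Icc)

/-- Lemma A.1 of the paper: if `x*` is the unique global minimizer of a continuous cost `c`
over `[0,1]^m`, then there is `δ : ℝ → ℝ` with `δ(ε) → 0` as `ε → 0⁺` such that for every
`ε ≥ 0`, every generative model `G : [0,1]^k → [0,1]^m` approximating `x*` within `ε`, and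
every global minimizer `z*` of `c ∘ G` over `[0,1]^k`, one has `‖G(z*) − x*‖ ≤ δ(ε)`. -/
theorem latent_search_recovers_minimizer
    (m k : ℕ) (hm : 0 < m) (hk : 0 < k)
    (c : EuclideanSpace ℝ (Fin m) → ℝ) (hc : Continuous c)
    (xstar : EuclideanSpace ℝ (Fin m)) (hxstar : xstar ∈ unitCube m)
    (hmin : ∀ x ∈ unitCube m, c xstar ≤ c x)
    (huniq : ∀ x ∈ unitCube m, c x = c xstar → x = xstar) :
    ∃ δ : ℝ → ℝ,
      Filter.Tendsto δ (nhdsWithin 0 (Set.Ioi 0)) (nhds 0) ∧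
      ∀ ε : ℝ, 0 ≤ ε →
        ∀ G : EuclideanSpace ℝ (Fin k) → EuclideanSpace ℝ (Fin m),
          Set.MapsTo G (unitCube k) (unitCube m) →
          (∃ ztilde ∈ unitCube k, ‖G ztilde - xstar‖ ≤ ε) →
          ∀ zstar ∈ unitCube k, (∀ z ∈ unitCube k, c (G zstar) ≤ c (G z)) →
            ‖G zstar - xstar‖ ≤ δ ε := by
  classical
  -- the set of achievable distances for budget ε
  set S : ℝ → Set ℝ := fun ε =>
    {d | ∃ x ∈ unitCube m, ∃ y ∈ unitCube m,
      ‖y - xstar‖ ≤ ε ∧ c x ≤ c y ∧ d = ‖x - xstar‖} with hS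
  have hSsub : ∀ ε, S ε ⊆ (fun x => ‖x - xstar‖) '' unitCube m := by
    rintro ε d ⟨x, hx, y, hy, _, _, rfl⟩
    exact ⟨x, hx, rfl⟩
  have hbdd : ∀ ε, BddAbove (S ε) := by
    intro ε
    refine BddAbove.mono (hSsub ε) ?_
    exact ((isCompact_unitCube m).image (by fun_prop)).bddAbove
  have hmem0 : ∀ ε : ℝ, 0 ≤ ε → (0 : ℝ) ∈ S ε := by
    intro ε hε
    exact ⟨xstar, hxstar, xstar, hxstar, by simp [hε], le_refl _, by simp⟩
  refine ⟨fun ε => sSup (S ε), ?_, ?_⟩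
  · -- tendsto
    rw [Metric.tendsto_nhdsWithin_nhds]
    intro η hη
    -- the compact set of cube points at distance ≥ η/2 from xstar
    set K : Set (EuclideanSpace ℝ (Fin m)) :=
      unitCube m ∩ {x | η / 2 ≤ ‖x - xstar‖} with hK
    have hKc : IsCompact K := by
      refine (isCompact_unitCube m).inter_right ?_
      have : Continuous fun x : EuclideanSpace ℝ (Fin m) => ‖x - xstar‖ := by fun_prop
      exact isClosed_le continuous_const this
    -- obtain ε₀ > 0 such that for ε < ε₀, every element of S ε is ≤ η/2
    obtain ⟨ε₀, hε₀, hεgood⟩ : ∃ ε₀ > 0, ∀ y ∈ unitCube m, ‖y - xstar‖ < ε₀ →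
        ∀ x ∈ unitCube m, c x ≤ c y → ‖x - xstar‖ ≤ η / 2 := by
      rcases K.eq_empty_or_nonempty with hKe | hKne
      · refine ⟨1, one_pos, fun y hy _ x hx _ => ?_⟩
        by_contra h
        exact Set.eq_empty_iff_forall_notMem.mp hKe x ⟨hx, le_of_lt (lt_of_not_ge h)⟩
      · obtain ⟨x₀, hx₀K, hx₀min⟩ := hKc.exists_isMinOn hKne hc.continuousOn
        have hx₀ne : x₀ ≠ xstar := by
          intro h
          have := hx₀K.2
          rw [h] at this
          simp at this
          linarith
        have hγ : 0 < c x₀ - c xstar := by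
          have h1 := hmin x₀ hx₀K.1
          rcases lt_or_eq_of_le h1 with h | h
          · linarith
          · exact absurd (huniq x₀ hx₀K.1 h.symm) hx₀ne
        -- continuity of c at xstar
        have := hc.continuousAt (x := xstar)
        rw [Metric.continuousAt_iff] at this
        obtain ⟨ε₀, hε₀, hball⟩ := this (c x₀ - c xstar) hγ
        refine ⟨ε₀, hε₀, fun y hy hyε x hx hxy => ?_⟩
        have hcy : c y < c x₀ := by
          have : dist y xstar < ε₀ := by
            rwa [dist_eq_norm]
          have := hball this
          rw [Real.dist_eq] at this
          have := abs_lt.mp this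
          linarith [this.1, this.2]
        have hxK : x ∉ K := by
          intro hxK
          exact absurd (lt_of_le_of_lt hxy hcy) (not_lt.mpr (hx₀min hxK))
        have : ¬ (η / 2 ≤ ‖x - xstar‖) := fun h => hxK ⟨hx, h⟩
        linarith [lt_of_not_ge this]
    refine ⟨ε₀, hε₀, fun ε hε hd => ?_⟩
    have hε' : 0 < ε := hε
    have hub : sSup (S ε) ≤ η / 2 := by
      apply csSup_le ⟨0, hmem0 ε hε'.le⟩
      rintro d ⟨x, hx, y, hy, hyε, hxy, rfl⟩
      have : ‖y - xstar‖ < ε₀ := by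
        rw [Real.dist_eq, sub_zero] at hd
        calc ‖y - xstar‖ ≤ ε := hyε
        _ < ε₀ := by rw [abs_of_pos hε'] at hd; exact hd
      exact hεgood y hy this x hx hxy
    have hlb : (0:ℝ) ≤ sSup (S ε) := le_csSup (hbdd ε) (hmem0 ε hε'.le)
    rw [Real.dist_eq, sub_zero, abs_of_nonneg hlb]
    linarith
  · -- the bound
    intro ε hε G hG ⟨zt, hzt, hztε⟩ zs hzs hzsmin
    apply le_csSup (hbdd ε)
    exact ⟨G zs, hG hzs, G zt, hG hzt, hztε, hzsmin zt hzt, rfl⟩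
end

section
/- Fix R ≥ 1 and dimensions m₀, m₁, …, m_R ∈ ℕ with m₀ = m and m_R = L, let σ : ℝ → ℝ and ℓ : ℝ^L → ℝ be continuously differentiable (C¹), fix parameters Θ⁰ = (Θ₁⁰, …, Θ_R⁰) with Θ_r⁰ a real m_r × m_{r−1} matrix and a target g in the dual of the parameter space, and define the R-layer network f_Θ(x) = Θ_R σ(Θ_{R−1} σ(⋯ σ(Θ₁ x) ⋯)) (σ applied entrywise) and the gradient-inversion cost c(x) = ‖D_Θ [ℓ(f_Θ(x))] |_{Θ = Θ⁰} − g‖. Suppose x* ∈ [0,1]^m is the unique global minimizer of c over [0,1]^m. Then there exists a function δ : ℝ → ℝ with δ(ε) → 0 as ε → 0⁺ such that for every ε ≥ 0, for every map G : [0,1]^k → [0,1]^m for which there exists z̃ ∈ [0,1]^k with ‖G(z̃) − x*‖ ≤ ε, and for every global minimizer z* of c ∘ G over [0,1]^k, one has ‖G(z*) − x*‖ ≤ δ(ε). -/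
attribute [local instance] Matrix.normedAddCommGroup Matrix.normedSpace

/-- Hidden activations of a feed-forward network: `h₀ = x` and
`h_{r+1} = σ(Θ_r · h_r)` with `σ` applied entrywise. -/
noncomputable def hiddenLayer (dims : ℕ → ℕ) (σ : ℝ → ℝ)
    (Θ : (r : ℕ) → Matrix (Fin (dims (r + 1))) (Fin (dims r)) ℝ)
    (x : EuclideanSpace ℝ (Fin (dims 0))) :
    (r : ℕ) → EuclideanSpace ℝ (Fin (dims r))
  | 0 => x
  | (r + 1) => WithLp.toLp 2 fun i => σ ((Θ r).mulVec (hiddenLayer dims σ Θ x r) i)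

/-- Extension of a finitely-indexed parameter tuple to an `ℕ`-indexed one (by zero). -/
noncomputable def extendParams (R : ℕ) (dims : ℕ → ℕ)
    (Θ : (r : Fin R) → Matrix (Fin (dims ((r : ℕ) + 1))) (Fin (dims (r : ℕ))) ℝ) :
    (r : ℕ) → Matrix (Fin (dims (r + 1))) (Fin (dims r)) ℝ :=
  fun r => if h : r < R then Θ ⟨r, h⟩ else 0

/-- The parameter space of an `R`-layer network, `R = R' + 1`: a tuple of `R` real matrices,
`Θ_r` of size `dims (r+1) × dims r`. -/
abbrev NetParams (R' : ℕ) (dims : ℕ → ℕ) : Type :=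
  (r : Fin (R' + 1)) → Matrix (Fin (dims ((r : ℕ) + 1))) (Fin (dims (r : ℕ))) ℝ

/-- The `R`-layer network `f_Θ(x) = Θ_R σ(Θ_{R-1} σ(⋯ σ(Θ₁ x) ⋯))`, with `R = R' + 1 ≥ 1`,
layer widths `dims 0, dims 1, …, dims (R'+1)`, and no activation on the last layer. -/
noncomputable def netFun (R' : ℕ) (dims : ℕ → ℕ) (σ : ℝ → ℝ)
    (Θ : NetParams R' dims) (x : EuclideanSpace ℝ (Fin (dims 0))) :
    EuclideanSpace ℝ (Fin (dims (R' + 1))) :=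
  WithLp.toLp 2 fun i =>
    (extendParams (R' + 1) dims Θ R').mulVec
      (hiddenLayer dims σ (extendParams (R' + 1) dims Θ) x R') i


section aux

variable (R' : ℕ) (dims : ℕ → ℕ) (σ : ℝ → ℝ)

local notation "P" => NetParams R' dims
local notation "E0" => EuclideanSpace ℝ (Fin (dims 0))

lemma contDiff_entry (r : ℕ) (i : Fin (dims (r+1))) (j : Fin (dims r)) :
    ContDiff ℝ 1 (fun p : P × E0 => extendParams (R'+1) dims p.1 r i j) := by
  unfold extendParams
  by_cases h : r < R' + 1
  · simp only [h, dif_pos]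
    have h0 : ContDiff ℝ 1 (fun p : P × E0 => p.1) := contDiff_fst
    have h1 : ContDiff ℝ 1 (fun p : P × E0 => p.1 ⟨r, h⟩) := contDiff_pi.mp h0 ⟨r, h⟩
    have h2 : ContDiff ℝ 1 (fun p : P × E0 => p.1 ⟨r, h⟩ i) := contDiff_pi.mp h1 i
    exact contDiff_pi.mp h2 j
  · simp only [h, dif_neg, not_false_iff]
    exact contDiff_const

lemma contDiff_hidden (hσ : ContDiff ℝ 1 σ) (r : ℕ) :
    ContDiff ℝ 1 (fun p : P × E0 =>
      hiddenLayer dims σ (extendParams (R'+1) dims p.1) p.2 r) := by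
  induction r with
  | zero => exact contDiff_snd
  | succ r ih =>
      rw [contDiff_euclidean]
      intro i
      show ContDiff ℝ 1 (fun p : P × E0 =>
        σ ((extendParams (R'+1) dims p.1 r).mulVec
            (hiddenLayer dims σ (extendParams (R'+1) dims p.1) p.2 r) i))
      refine hσ.comp ?_
      have : ∀ p : P × E0,
          (extendParams (R'+1) dims p.1 r).mulVec
            (hiddenLayer dims σ (extendParams (R'+1) dims p.1) p.2 r) i
          = ∑ j, extendParams (R'+1) dims p.1 r i j *
              hiddenLayer dims σ (extendParams (R'+1) dims p.1) p.2 r j := by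
        intro p; simp [Matrix.mulVec, dotProduct]
      simp only [this]
      exact ContDiff.sum fun j _ =>
        (contDiff_entry R' dims r i j).mul (contDiff_euclidean.mp ih j)

lemma contDiff_H (hσ : ContDiff ℝ 1 σ)
    (ℓ : EuclideanSpace ℝ (Fin (dims (R' + 1))) → ℝ) (hℓ : ContDiff ℝ 1 ℓ) :
    ContDiff ℝ 1 (fun p : P × E0 => ℓ (netFun R' dims σ p.1 p.2)) := by
  refine hℓ.comp ?_
  rw [contDiff_euclidean]
  intro i
  show ContDiff ℝ 1 (fun p : P × E0 =>
    (extendParams (R'+1) dims p.1 R').mulVec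
      (hiddenLayer dims σ (extendParams (R'+1) dims p.1) p.2 R') i)
  have : ∀ p : P × E0,
      (extendParams (R'+1) dims p.1 R').mulVec
        (hiddenLayer dims σ (extendParams (R'+1) dims p.1) p.2 R') i
      = ∑ j, extendParams (R'+1) dims p.1 R' i j *
          hiddenLayer dims σ (extendParams (R'+1) dims p.1) p.2 R' j := by
    intro p; simp [Matrix.mulVec, dotProduct]
  simp only [this]
  exact ContDiff.sum fun j _ =>
    (contDiff_entry R' dims R' i j).mul
      (contDiff_euclidean.mp (contDiff_hidden R' dims σ hσ R') j)

lemma continuous_cost (hσ : ContDiff ℝ 1 σ)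
    (ℓ : EuclideanSpace ℝ (Fin (dims (R' + 1))) → ℝ) (hℓ : ContDiff ℝ 1 ℓ)
    (Θ0 : NetParams R' dims) (g : NetParams R' dims →L[ℝ] ℝ) :
    Continuous (fun x : E0 =>
      @Norm.norm (NetParams R' dims →L[ℝ] ℝ) ContinuousLinearMap.hasOpNorm
        (fderiv ℝ (fun Θ : NetParams R' dims => ℓ (netFun R' dims σ Θ x)) Θ0 - g)) := by
  set H : P × E0 → ℝ := fun p => ℓ (netFun R' dims σ p.1 p.2) with hH
  have hCD : ContDiff ℝ 1 H := contDiff_H R' dims σ hσ ℓ hℓ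
  have key : ∀ x : E0,
      fderiv ℝ (fun Θ : NetParams R' dims => ℓ (netFun R' dims σ Θ x)) Θ0
      = (fderiv ℝ H (Θ0, x)).comp (ContinuousLinearMap.inl ℝ P E0) := by
    intro x
    have hdiff : HasFDerivAt H (fderiv ℝ H (Θ0, x)) (Θ0, x) :=
      (hCD.differentiable one_ne_zero (Θ0, x)).hasFDerivAt
    have hcomp : HasFDerivAt (fun Θ : P => H (Θ, x))
        ((fderiv ℝ H (Θ0, x)).comp (ContinuousLinearMap.inl ℝ P E0)) Θ0 :=
      by have h4 := hdiff.comp Θ0 (hasFDerivAt_prodMk_left (𝕜 := ℝ) Θ0 x); exact h4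
    exact hcomp.fderiv
  simp only [key]
  have h1 : Continuous (fun x : E0 => fderiv ℝ H (Θ0, x)) :=
    (hCD.continuous_fderiv one_ne_zero).comp (continuous_const.prodMk continuous_id)
  have h2 : Continuous (fun x : E0 =>
      (fderiv ℝ H (Θ0, x)).comp (ContinuousLinearMap.inl ℝ P E0)) :=
    ((ContinuousLinearMap.compL ℝ P (P × E0) ℝ).flip
      (ContinuousLinearMap.inl ℝ P E0)).continuous.comp h1
  exact (@continuous_norm _
    ContinuousLinearMap.toSeminormedAddCommGroup.toSeminormedAddGroup).comp
    (h2.sub continuous_const)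

end aux

/-- Property 1 of the paper: for the gradient-inversion cost
`c(x) = ‖D_Θ[ℓ(f_Θ(x))]|_{Θ = Θ⁰} − g‖` of an `R`-layer network (`R = R' + 1 ≥ 1`) with C¹
activation and C¹ loss, if `x*` is the unique global minimizer of `c` over `[0,1]^m`, then
there is `δ : ℝ → ℝ` with `δ(ε) → 0` as `ε → 0⁺` such that for every `ε ≥ 0`, every
generative model `G : [0,1]^k → [0,1]^m` approximating `x*` within `ε`, and every global
minimizer `z*` of `c ∘ G` over `[0,1]^k`, one has `‖G(z*) − x*‖ ≤ δ(ε)`. -/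
theorem latent_search_recovers_minimizer_of_net_cost
    (R' : ℕ) (m L k : ℕ) (dims : ℕ → ℕ) (hdims0 : dims 0 = m) (hdimsR : dims (R' + 1) = L)
    (σ : ℝ → ℝ) (hσ : ContDiff ℝ 1 σ)
    (ℓ : EuclideanSpace ℝ (Fin (dims (R' + 1))) → ℝ) (hℓ : ContDiff ℝ 1 ℓ)
    (Θ0 : NetParams R' dims) (g : NetParams R' dims →L[ℝ] ℝ)
    (c : EuclideanSpace ℝ (Fin (dims 0)) → ℝ)
    (hc : ∀ x, c x =
      @Norm.norm (NetParams R' dims →L[ℝ] ℝ) ContinuousLinearMap.hasOpNorm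
        (fderiv ℝ (fun Θ : NetParams R' dims => ℓ (netFun R' dims σ Θ x)) Θ0 - g))
    (xstar : EuclideanSpace ℝ (Fin (dims 0))) (hxstar : xstar ∈ unitCube (dims 0))
    (hmin : ∀ x ∈ unitCube (dims 0), c xstar ≤ c x)
    (huniq : ∀ x ∈ unitCube (dims 0), c x = c xstar → x = xstar) :
    ∃ δ : ℝ → ℝ,
      Filter.Tendsto δ (nhdsWithin 0 (Set.Ioi 0)) (nhds 0) ∧
      ∀ ε : ℝ, 0 ≤ ε →
        ∀ G : EuclideanSpace ℝ (Fin k) → EuclideanSpace ℝ (Fin (dims 0)),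
          Set.MapsTo G (unitCube k) (unitCube (dims 0)) →
          (∃ ztilde ∈ unitCube k, ‖G ztilde - xstar‖ ≤ ε) →
          ∀ zstar ∈ unitCube k, (∀ z ∈ unitCube k, c (G zstar) ≤ c (G z)) →
            ‖G zstar - xstar‖ ≤ δ ε := by
  classical
  have hcont : Continuous c := by
    have h := continuous_cost R' dims σ hσ ℓ hℓ Θ0 g
    have hceq : c = fun x => @Norm.norm (NetParams R' dims →L[ℝ] ℝ)
        ContinuousLinearMap.hasOpNorm (fderiv ℝ (fun Θ : NetParams R' dims =>
        ℓ (netFun R' dims σ Θ x)) Θ0 - g) := funext hc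
    rw [hceq]; exact h
  have hcnonneg : ∀ x, 0 ≤ c x := fun x => by rw [hc x]; exact @norm_nonneg _ ContinuousLinearMap.toSeminormedAddCommGroup.toSeminormedAddGroup _
  set K := unitCube (dims 0) with hK
  have hKcompact : IsCompact K :=
    (EuclideanSpace.equiv (Fin (dims 0)) ℝ).toHomeomorph.isCompact_preimage.mpr
      (isCompact_univ_pi fun _ => isCompact_Icc)
  have hcbdd : BddAbove (c '' K) := (hKcompact.image hcont).bddAbove
  have hnbdd : BddAbove ((fun x => ‖x - xstar‖) '' K) :=
    (hKcompact.image ((continuous_id.sub continuous_const).norm)).bddAbove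
  set Ψ : ℝ → ℝ := fun ε => sSup (c '' {x | x ∈ K ∧ ‖x - xstar‖ ≤ ε}) with hΨ
  set Φ : ℝ → ℝ := fun t =>
    sSup ((fun x => ‖x - xstar‖) '' {x | x ∈ K ∧ c x ≤ t}) with hΦ
  have hΨbdd : ∀ ε : ℝ, BddAbove (c '' {x | x ∈ K ∧ ‖x - xstar‖ ≤ ε}) := fun ε =>
    hcbdd.mono (Set.image_mono fun x hx => hx.1)
  have hΦbdd : ∀ t : ℝ, BddAbove ((fun x => ‖x - xstar‖) '' {x | x ∈ K ∧ c x ≤ t}) :=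
    fun t => hnbdd.mono (Set.image_mono fun x hx => hx.1)
  have hΨge : ∀ ε : ℝ, 0 ≤ ε → c xstar ≤ Ψ ε := by
    intro ε hε
    refine le_csSup (hΨbdd ε) ?_
    exact ⟨xstar, ⟨hxstar, by simp [hε]⟩, rfl⟩
  refine ⟨Φ ∘ Ψ, ?_, ?_⟩
  · rw [Metric.tendsto_nhdsWithin_nhds]
    intro η hη
    have hS : ∃ t₀, c xstar < t₀ ∧ ∀ x ∈ K, c x < t₀ → ‖x - xstar‖ ≤ η / 2 := by
      by_cases hne : {x | x ∈ K ∧ η / 2 ≤ ‖x - xstar‖}.Nonempty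
      · have hSc : IsCompact {x | x ∈ K ∧ η / 2 ≤ ‖x - xstar‖} := by
          refine hKcompact.inter_right ?_
          exact isClosed_le continuous_const ((continuous_id.sub continuous_const).norm)
        obtain ⟨x₁, hx₁S, hx₁min⟩ := hSc.exists_isMinOn hne hcont.continuousOn
        have hμ : c xstar < c x₁ := by
          rcases lt_or_eq_of_le (hmin x₁ hx₁S.1) with h | h
          · exact h
          · exfalso
            have hx1 : x₁ = xstar := huniq x₁ hx₁S.1 h.symm
            have h2 := hx₁S.2
            rw [hx1] at h2
            simp at h2
            linarith
        refine ⟨c x₁, hμ, ?_⟩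
        intro x hxK hxlt
        by_contra hcon
        push_neg at hcon
        exact absurd (hx₁min ⟨hxK, le_of_lt hcon⟩) (not_le.mpr hxlt)
      · refine ⟨c xstar + 1, by linarith, ?_⟩
        intro x hxK _
        by_contra hcon
        push_neg at hcon
        exact hne ⟨x, hxK, le_of_lt hcon⟩
    obtain ⟨t₀, ht₀, hΦsmall⟩ := hS
    obtain ⟨r, hr, hrball⟩ :=
      Metric.continuous_iff.mp hcont xstar ((t₀ - c xstar) / 2) (by linarith)
    refine ⟨r / 2, by linarith, ?_⟩
    intro ε hε hdist
    have hε0 : 0 < ε := hε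
    have hεr : ε < r / 2 := by
      rw [Real.dist_eq, sub_zero, abs_of_pos hε0] at hdist
      exact hdist
    have hΨle : Ψ ε ≤ c xstar + (t₀ - c xstar) / 2 := by
      refine Real.sSup_le ?_ (by linarith [hcnonneg xstar])
      rintro y ⟨x, ⟨hxK, hxd⟩, rfl⟩
      have hdx : dist x xstar < r := by
        rw [dist_eq_norm]; linarith
      have hb := hrball x hdx
      rw [Real.dist_eq] at hb
      have hb' := abs_lt.mp hb
      linarith [hb'.1, hb'.2]
    have hΦle : Φ (Ψ ε) ≤ η / 2 := by
      refine Real.sSup_le ?_ (by linarith)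
      rintro y ⟨x, ⟨hxK, hxc⟩, rfl⟩
      exact hΦsmall x hxK (by linarith [le_trans hxc hΨle])
    have hΦpos : 0 ≤ Φ (Ψ ε) := by
      have : ‖xstar - xstar‖ ≤ Φ (Ψ ε) :=
        le_csSup (hΦbdd (Ψ ε)) ⟨xstar, ⟨hxstar, hΨge ε (le_of_lt hε0)⟩, rfl⟩
      simpa using this
    show dist ((Φ ∘ Ψ) ε) 0 < η
    simp only [Function.comp_apply]
    rw [Real.dist_eq, sub_zero, abs_of_nonneg hΦpos]
    calc Φ (Ψ ε) ≤ η / 2 := hΦle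
      _ < η := by linarith
  · intro ε hε G hmaps ⟨ztilde, hztK, hzt⟩ zstar hzK hzmin
    have h1 : c (G zstar) ≤ c (G ztilde) := hzmin ztilde hztK
    have h2 : c (G ztilde) ≤ Ψ ε :=
      le_csSup (hΨbdd ε) ⟨G ztilde, ⟨hmaps hztK, hzt⟩, rfl⟩
    exact le_csSup (hΦbdd (Ψ ε)) ⟨G zstar, ⟨hmaps hzK, h1.trans h2⟩, rfl⟩
end
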